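/- Let λ be a partition of m and μ = (μ_1,…,μ_k) a composition of m. The number of semistandard Young tableaux of shape λ having exactly μ_i entries equal to i for each 1 ≤ i ≤ k (and no entries exceeding k) — the Kostka number K^λ_μ — equals the number of standard Young tableaux T of shape λ such that μ refines DesComp(T). -/

import Mathlib

open scoped Classical

namespace QC

/-- A filling assigns a natural-number entry to each cell `(i, j)`;
entries are `0` outside the shape. Values are 1-based. -/
abbrev Filling : Type := ℕ → ℕ → ℕ

/-- The cell `(i, j)` (row `i`, column `j`, both 0-based) lies in the Young diagram of `lam`. -/
def InShape (lam : List ℕ) (i j : ℕ) : Prop :=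
  i < lam.length ∧ j < lam.getD i 0

/-- The finite set of cells of the Young diagram of `lam`. -/
def cells (lam : List ℕ) : Finset (ℕ × ℕ) :=
  (Finset.range lam.length).biUnion fun i =>
    ({i} : Finset ℕ) ×ˢ Finset.range (lam.getD i 0)

/-- `lam` is a partition of `m`: weakly decreasing, positive parts, summing to `m`. -/
def IsPartitionOf (m : ℕ) (lam : List ℕ) : Prop :=
  lam.Pairwise (· ≥ ·) ∧ (∀ x ∈ lam, 0 < x) ∧ lam.sum = m

/-- `a` is a composition of `m`: positive parts summing to `m`. -/
def IsCompositionOf (m : ℕ) (a : List ℕ) : Prop :=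
  (∀ x ∈ a, 0 < x) ∧ a.sum = m

/-- `T` is a semistandard Young tableau of shape `lam`: positive entries on the shape,
zero off the shape, rows weakly increasing, columns strictly increasing. -/
def IsSSYT (lam : List ℕ) (T : Filling) : Prop :=
  (∀ i j, ¬ InShape lam i j → T i j = 0) ∧
  (∀ i j, InShape lam i j → 0 < T i j) ∧
  (∀ i j1 j2, j1 ≤ j2 → InShape lam i j2 → T i j1 ≤ T i j2) ∧
  (∀ i1 i2 j, i1 < i2 → InShape lam i2 j → T i1 j < T i2 j)

/-- All entries of `T` are at most `n`. -/
def EntriesLE (n : ℕ) (T : Filling) : Prop := ∀ i j, T i j ≤ n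

/-- `T` is a standard Young tableau of shape `lam ⊢ m`: a semistandard tableau in which
each of `1, …, m` appears exactly once. -/
def IsSYT (lam : List ℕ) (m : ℕ) (T : Filling) : Prop :=
  IsSSYT lam T ∧ EntriesLE m T ∧
    ∀ k, 1 ≤ k → k ≤ m → ∃! c : ℕ × ℕ, InShape lam c.1 c.2 ∧ T c.1 c.2 = k

/-- `k` is a descent of the standard tableau `T`: `k + 1` lies in a strictly lower row. -/
def IsDescent (lam : List ℕ) (T : Filling) (k : ℕ) : Prop :=
  ∃ i1 j1 i2 j2, InShape lam i1 j1 ∧ InShape lam i2 j2 ∧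
    T i1 j1 = k ∧ T i2 j2 = k + 1 ∧ i1 < i2

/-- The sorted list of descents of `T`, a standard tableau with `m` cells. -/
noncomputable def descentList (lam : List ℕ) (m : ℕ) (T : Filling) : List ℕ :=
  ((Finset.Ico 1 m).filter fun k => IsDescent lam T k).sort (· ≤ ·)

/-- The number of descents of `T`. -/
noncomputable def numDescents (lam : List ℕ) (m : ℕ) (T : Filling) : ℕ :=
  ((Finset.Ico 1 m).filter fun k => IsDescent lam T k).card

/-- The descent composition `(d₁, d₂ - d₁, …, m - d_{s-1})` of a standard tableau. -/
noncomputable def desComp (lam : List ℕ) (m : ℕ) (T : Filling) : List ℕ :=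
  if m = 0 then [] else
    List.zipWith (· - ·) (descentList lam m T ++ [m]) (0 :: descentList lam m T)

/-- The number of cells of `T` carrying the entry `v`. -/
def countEq (lam : List ℕ) (T : Filling) (v : ℕ) : ℕ :=
  ((cells lam).filter fun c => T c.1 c.2 = v).card

/-- The weight of `T` as a list `(γ₁, …, γₙ)`, `γᵢ` the number of entries equal to `i`. -/
def wt (lam : List ℕ) (n : ℕ) (T : Filling) : List ℕ :=
  (List.range n).map fun v => countEq lam T (v + 1)

/-- The standardization of `T`: cells are relabelled `1, …, m` in order of increasing entry,
breaking ties between equal entries by increasing column index. -/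
noncomputable def stdize (lam : List ℕ) (T : Filling) : Filling := fun i j =>
  if InShape lam i j then
    ((cells lam).filter fun c =>
      T c.1 c.2 < T i j ∨ (T c.1 c.2 = T i j ∧ c.2 ≤ j)).card
  else 0

/-- Given a weak composition `g`, `destValue g k` is the unique `i` with
`g₁ + ⋯ + g_{i-1} < k ≤ g₁ + ⋯ + g_i` (and `0` for `k = 0`). -/
def destValue (g : List ℕ) (k : ℕ) : ℕ :=
  ((List.range g.length).filter fun i => (g.take i).sum < k).length

/-- The destandardization `D_g(T₀)`: each entry `j` of `T₀` is replaced by the unique `i`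
with `g₁ + ⋯ + g_{i-1} < j ≤ g₁ + ⋯ + g_i`. -/
def Dmap (g : List ℕ) (T : Filling) : Filling := fun i j => destValue g (T i j)

/-- `Refines a b`: the composition `b` refines `a`, i.e. `b` can be cut into consecutive
blocks whose sums are the parts of `a` in order. -/
def Refines (a b : List ℕ) : Prop :=
  ∃ L : List (List ℕ), L.flatten = b ∧ L.map List.sum = a

/-- Strict lexicographic order on integer sequences. -/
def lexLt (a b : List ℕ) : Prop := List.Lex (· < ·) a b

/-- Weak lexicographic order on integer sequences. -/
def lexLe (a b : List ℕ) : Prop := a = b ∨ lexLt a b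

/-- The largest entry of `T`. -/
def maxEntry (lam : List ℕ) (T : Filling) : ℕ :=
  (cells lam).sup fun c => T c.1 c.2

/-- The weight of `T` (over all values), with zero parts deleted. -/
def wtFull (lam : List ℕ) (T : Filling) : List ℕ :=
  ((List.range (maxEntry lam T)).map fun v => countEq lam T (v + 1)).filter (· ≠ 0)

/-- The proper partial sums `α₁, α₁ + α₂, …, α₁ + ⋯ + α_{s-1}` of a composition. -/
def innerSums (a : List ℕ) : List ℕ :=
  (List.range a.length).tail.map fun t => (a.take t).sum

/-- `f : Fin m → Fin n` encodes a sequence `1 ≤ i₁ ≤ i₂ ≤ … ≤ i_m ≤ n` (via `i_t = f (t-1) + 1`)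
which ascends strictly, `i_j < i_{j+1}`, at every proper partial sum `j` of `a`. -/
def IsFWord (m n : ℕ) (a : List ℕ) (f : Fin m → Fin n) : Prop :=
  Monotone f ∧
    ∀ (t : ℕ) (ht : t + 1 < m), (t + 1) ∈ innerSums a →
      f ⟨t, Nat.lt_of_succ_lt ht⟩ < f ⟨t + 1, ht⟩

/-- The fundamental quasisymmetric polynomial `F_a(x₁, …, xₙ)` of degree `m`. -/
noncomputable def Fpoly (m n : ℕ) (a : List ℕ) : MvPolynomial (Fin n) ℤ :=
  ∑ f ∈ Finset.univ.filter (fun f : Fin m → Fin n => IsFWord m n a f),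
    ∏ t : Fin m, MvPolynomial.X (f t)

/-- The monomial `x₁^{γ₁} ⋯ xₙ^{γₙ}` of a tableau `T` of weight `γ`. -/
noncomputable def wtMonomial (lam : List ℕ) (n : ℕ) (T : Filling) :
    MvPolynomial (Fin n) ℤ :=
  ∏ i : Fin n, MvPolynomial.X i ^ countEq lam T (i.val + 1)

/-- `Rot` of a word `w` of length `k` on `{1, …, n}`: the `j`-th letter of `rot k n w`
is `n + 1 - w_{k+1-j}` (1-based), here written 0-based. -/
def rot (k n : ℕ) (w : Fin k → ℕ) : Fin k → ℕ := fun j =>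
  n + 1 - w ⟨k - 1 - j.val, by have := j.isLt; omega⟩

/-- The descent set of a word `w = w₁ ⋯ w_k`: positions `i ∈ {1, …, k-1}` with `wᵢ > w_{i+1}`
(1-based positions; `w ⟨i-1,_⟩` is `wᵢ`). -/
noncomputable def wordDes (k : ℕ) (w : Fin k → ℕ) : Finset ℕ :=
  (Finset.Ico 1 k).filter fun i =>
    ∃ (h1 : i - 1 < k) (h2 : i < k), w ⟨i, h2⟩ < w ⟨i - 1, h1⟩

/-- The descent composition of a word of length `k`. -/
noncomputable def wordDesComp (k : ℕ) (w : Fin k → ℕ) : List ℕ :=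
  if k = 0 then []
  else
    List.zipWith (· - ·) ((wordDes k w).sort (· ≤ ·) ++ [k])
      (0 :: (wordDes k w).sort (· ≤ ·))

lemma mem_cells {lam : List ℕ} {c : ℕ × ℕ} : c ∈ cells lam ↔ InShape lam c.1 c.2 := by
  obtain ⟨i, j⟩ := c
  simp [cells, InShape, Finset.mem_biUnion, and_comm]

lemma sum_take_getD (l : List ℕ) (v : ℕ) :
    (l.take v).sum = ∑ i ∈ Finset.range v, l.getD i 0 := by
  induction v with
  | zero => simp
  | succ n ih =>
    rcases le_or_gt l.length n with h | h
    · rw [List.take_of_length_le h, List.take_of_length_le (by omega)] at *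
      rw [Finset.sum_range_succ, ← ih, List.getD_eq_default _ _ (by omega)]
      simp
    · rw [Finset.sum_range_succ, ← ih, List.sum_take_succ _ _ h,
        List.getD_eq_getElem?_getD, List.getElem?_eq_getElem h]
      simp

lemma card_cells (lam : List ℕ) : (cells lam).card = lam.sum := by
  rw [cells, Finset.card_biUnion]
  · simp only [Finset.card_product, Finset.card_singleton, one_mul, Finset.card_range]
    rw [← sum_take_getD lam lam.length, List.take_length]
  · intro x _ y _ hxy
    simp only [Finset.disjoint_left]
    rintro ⟨a, b⟩ h1 h2
    simp_all [Finset.mem_product]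

lemma sum_take_mono (l : List ℕ) {i j : ℕ} (h : i ≤ j) :
    (l.take i).sum ≤ (l.take j).sum := by
  conv_rhs => rw [← List.take_append_drop i (l.take j)]
  rw [List.take_take, min_eq_left h, List.sum_append]
  omega

lemma sum_take_succ (l : List ℕ) (i : ℕ) (h : i < l.length) :
    (l.take (i+1)).sum = (l.take i).sum + l.getD i 0 := by
  rw [List.take_succ, List.sum_append, List.getElem?_eq_getElem h]
  simp [List.getD_eq_getElem?_getD, List.getElem?_eq_getElem h]

lemma destValue_zero (g : List ℕ) : destValue g 0 = 0 := by
  simp [destValue]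

lemma destValue_mono (g : List ℕ) {k k' : ℕ} (h : k ≤ k') :
    destValue g k ≤ destValue g k' := by
  apply List.Sublist.length_le
  apply List.monotone_filter_right
  intro i hi
  simp_all
  omega

lemma destValue_eq {g : List ℕ} {k v : ℕ} (hv1 : 1 ≤ v) (hv2 : v ≤ g.length)
    (h1 : (g.take (v-1)).sum < k) (h2 : k ≤ (g.take v).sum) :
    destValue g k = v := by
  rw [destValue]
  have hsplit : g.length = v + (g.length - v) := by omega
  rw [hsplit, List.range_add, List.filter_append]
  have e1 : (List.range v).filter (fun i => decide ((g.take i).sum < k)) = List.range v := by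
    rw [List.filter_eq_self]
    intro i hi
    simp only [List.mem_range] at hi
    have : (g.take i).sum ≤ (g.take (v-1)).sum := sum_take_mono g (by omega)
    simp; omega
  have e2 : ((List.range (g.length - v)).map (v + ·)).filter
      (fun i => decide ((g.take i).sum < k)) = [] := by
    rw [List.filter_eq_nil_iff]
    intro i hi
    simp only [List.mem_map, List.mem_range] at hi
    obtain ⟨j, hj, rfl⟩ := hi
    have : (g.take v).sum ≤ (g.take (v+j)).sum := sum_take_mono g (by omega)
    simp; omega
  rw [e1, e2]
  simp

lemma destValue_spec {mu : List ℕ} (hpos : ∀ x ∈ mu, 0 < x) {k : ℕ}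
    (hk1 : 1 ≤ k) (hk2 : k ≤ mu.sum) :
    ∃ v, 1 ≤ v ∧ v ≤ mu.length ∧ (mu.take (v-1)).sum < k ∧ k ≤ (mu.take v).sum ∧
      destValue mu k = v := by
  have hex : ∃ t, k ≤ (mu.take t).sum := ⟨mu.length, by rwa [List.take_length]⟩
  classical
  let v := Nat.find hex
  have hv2 : k ≤ (mu.take v).sum := Nat.find_spec hex
  have hv1 : 1 ≤ v := by
    rcases Nat.eq_zero_or_pos v with h | h
    · exfalso; have := Nat.find_spec hex; rw [show v = 0 from h] at hv2; simp at hv2; omega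
    · exact h
  have hvlt : (mu.take (v-1)).sum < k := by
    have := Nat.find_min hex (m := v - 1) (by omega)
    omega
  have hvlen : v ≤ mu.length := by
    by_contra h
    have : (mu.take (v-1)).sum = mu.sum := by
      rw [List.take_of_length_le (by omega)]
    omega
  exact ⟨v, hv1, hvlen, hvlt, hv2, destValue_eq hv1 hvlen hvlt hv2⟩

lemma sum_take_strict {mu : List ℕ} (hpos : ∀ x ∈ mu, 0 < x) {i j : ℕ}
    (hij : i < j) (hj : j ≤ mu.length) :
    (mu.take i).sum < (mu.take j).sum := by
  have h1 : (mu.take (i+1)).sum ≤ (mu.take j).sum := sum_take_mono mu (by omega)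
  have h2 := List.sum_take_succ mu i (by omega)
  have : 0 < mu[i] := hpos _ (List.getElem_mem _)
  omega

lemma destValue_partial_sum {mu : List ℕ} (hpos : ∀ x ∈ mu, 0 < x) {s : ℕ}
    (hs1 : 1 ≤ s) (hs2 : s ≤ mu.length) (hpossum : 0 < (mu.take s).sum) :
    destValue mu ((mu.take s).sum) = s :=
  destValue_eq hs1 hs2 (sum_take_strict hpos (by omega) hs2) le_rfl

/-- Lemma A: build a refinement from partial-sum containment. -/
lemma refines_of_partial_sums :
    ∀ (a b : List ℕ), (∀ x ∈ a, 0 < x) → (∀ x ∈ b, 0 < x) → a.sum = b.sum →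
    (∀ t, 0 < t → t < a.length → ∃ s, (b.take s).sum = (a.take t).sum) →
    ∃ L : List (List ℕ), L.flatten = b ∧ L.map List.sum = a := by
  intro a
  induction a with
  | nil =>
    intro b _ hbpos hsum _
    have : b = [] := by
      cases b with
      | nil => rfl
      | cons x xs =>
        exfalso
        have := hbpos x (by simp)
        have : x + xs.sum = 0 := by simpa using hsum.symm
        omega
    exact ⟨[], by simp [this]⟩
  | cons x a' ih =>
    intro b hapos hbpos hsum hps
    rcases List.eq_nil_or_concat a' with rfl | hne
    · exact ⟨[b], by simp, by simp at hsum ⊢; omega⟩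
    · have ha'len : 0 < a'.length := by
        rcases hne with ⟨l, e, rfl⟩; simp
      obtain ⟨s, hs⟩ := hps 1 (by omega) (by simp; omega)
      simp at hs
      have hdropsum : (b.drop s).sum = a'.sum := by
        have := List.take_append_drop s b
        have h2 : (b.take s).sum + (b.drop s).sum = b.sum := by
          rw [← List.sum_append, this]
        simp at hsum
        omega
      have hps' : ∀ t, 0 < t → t < a'.length →
          ∃ s2, ((b.drop s).take s2).sum = (a'.take t).sum := by
        intro t ht htlen
        obtain ⟨s', hs'⟩ := hps (t+1) (by omega) (by simp; omega)
        have hsumt : ((x :: a').take (t+1)).sum = x + (a'.take t).sum := by simp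
        rw [hsumt, ← hs] at hs'
        have hposst : 0 < (a'.take t).sum := by
          have : (a'.take (t)).sum ≥ a'[0] := by
            have : a'.take t = a'[0] :: (a'.drop 1).take (t-1) := by
              cases a' with
              | nil => simp at ha'len
              | cons y ys => cases t with
                | zero => omega
                | succ u => simp
            rw [this]; simp
          have := hapos a'[0] (by simp [List.getElem_mem])
          omega
        have hlt : s < s' := by
          by_contra h
          have := sum_take_mono b (show s' ≤ s by omega)
          omega
        refine ⟨s' - s, ?_⟩
        have : b.take s' = b.take s ++ (b.drop s).take (s' - s) := by
          rw [← List.take_add]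
          congr 1
          omega
        rw [this, List.sum_append] at hs'
        omega
      obtain ⟨L', hL1, hL2⟩ := ih (b.drop s) (fun y hy => hapos y (by simp [hy]))
        (fun y hy => hbpos y (List.mem_of_mem_drop hy)) hdropsum.symm hps'
      refine ⟨b.take s :: L', ?_, ?_⟩
      · simp [hL1]
      · simp [hL2, hs]

/-- Lemma B: a refinement yields partial-sum containment. -/
lemma partial_sums_of_refines {a b : List ℕ} (h : ∃ L : List (List ℕ),
    L.flatten = b ∧ L.map List.sum = a) (t : ℕ) :
    ∃ s, (b.take s).sum = (a.take t).sum := by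
  obtain ⟨L, rfl, rfl⟩ := h
  refine ⟨(L.take t).flatten.length, ?_⟩
  have : L.flatten = (L.take t).flatten ++ (L.drop t).flatten := by
    rw [← List.flatten_append, List.take_append_drop]
  rw [this, List.take_left', List.sum_flatten, ← List.map_take]
  rfl

lemma mem_descentList {lam : List ℕ} {m : ℕ} {T : Filling} {k : ℕ} :
    k ∈ descentList lam m T ↔ (1 ≤ k ∧ k < m) ∧ IsDescent lam T k := by
  rw [descentList, Finset.mem_sort, Finset.mem_filter, Finset.mem_Ico]

lemma descentList_sorted (lam : List ℕ) (m : ℕ) (T : Filling) :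
    (descentList lam m T).Pairwise (· < ·) := (Finset.sortedLT_sort _).pairwise

lemma full_sorted (lam : List ℕ) (m : ℕ) (T : Filling) (hm : 0 < m) :
    (0 :: (descentList lam m T ++ [m])).Pairwise (· < ·) := by
  rw [List.pairwise_cons]
  constructor
  · intro b hb
    simp at hb
    rcases hb with hb | rfl
    · exact (mem_descentList.mp hb).1.1
    · exact hm
  · rw [List.pairwise_append]
    refine ⟨descentList_sorted lam m T, by simp, ?_⟩
    intro x hx y hy
    simp at hy
    subst hy
    exact (mem_descentList.mp hx).1.2

lemma tele : ∀ (l : List ℕ) (c : ℕ), List.Chain (· ≤ ·) c l → ∀ t, t ≤ l.length →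
    ((List.zipWith (· - ·) l (c :: l)).take t).sum + c = (c :: l).getD t 0 := by
  intro l
  induction l with
  | nil =>
    intro c _ t ht
    simp at ht
    simp [ht]
  | cons x l' ih =>
    intro c hc t ht
    rcases List.chain_cons.mp hc with ⟨hcx, hchain⟩
    cases t with
    | zero => simp
    | succ u =>
      have := ih x hchain u (by simpa using ht)
      simp only [List.zipWith_cons_cons, List.take_succ_cons, List.sum_cons]
      have hgd : (c :: x :: l').getD (u+1) 0 = (x :: l').getD u 0 := rfl
      rw [hgd]
      omega

lemma zipWith_trunc : ∀ (a b : List ℕ) (x : ℕ), a.length ≤ b.length →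
    List.zipWith (· - ·) a (b ++ [x]) = List.zipWith (· - ·) a b := by
  intro a
  induction a with
  | nil => intros; simp
  | cons y a' ih =>
    intro b x hb
    cases b with
    | nil => simp at hb
    | cons z b' => simp only [List.cons_append, List.zipWith_cons_cons]
                   rw [ih b' x (by simpa using hb)]

lemma desComp_eq {lam : List ℕ} {m : ℕ} {T : Filling} (hm : 0 < m) :
    desComp lam m T = List.zipWith (· - ·) (descentList lam m T ++ [m])
      (0 :: (descentList lam m T ++ [m])) := by
  rw [desComp, if_neg (by omega)]
  have : (0 : ℕ) :: (descentList lam m T ++ [m]) = (0 :: descentList lam m T) ++ [m] := by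
    simp
  rw [this, zipWith_trunc _ _ _ (by simp)]

lemma desComp_take_sum {lam : List ℕ} {m : ℕ} {T : Filling} (hm : 0 < m) {t : ℕ}
    (ht : t ≤ (descentList lam m T).length + 1) :
    ((desComp lam m T).take t).sum = (0 :: (descentList lam m T ++ [m])).getD t 0 := by
  have hs := full_sorted lam m T hm
  have hchain : List.Chain (· ≤ ·) 0 (descentList lam m T ++ [m]) := by
    have : List.Chain' (· < ·) (0 :: (descentList lam m T ++ [m])) := by
      exact List.isChain_iff_pairwise.mpr hs
    exact List.IsChain.imp (fun _ _ h => le_of_lt h) this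
  have := tele (descentList lam m T ++ [m]) 0 hchain t (by simpa using ht)
  rw [desComp_eq hm]
  omega

lemma desComp_length {lam : List ℕ} {m : ℕ} {T : Filling} (hm : 0 < m) :
    (desComp lam m T).length = (descentList lam m T).length + 1 := by
  rw [desComp, if_neg (by omega)]
  simp

lemma desComp_sum {lam : List ℕ} {m : ℕ} {T : Filling} (hm : 0 < m) :
    (desComp lam m T).sum = m := by
  have h := desComp_take_sum (lam := lam) (T := T) hm
    (t := (descentList lam m T).length + 1) le_rfl
  rw [List.take_of_length_le (by rw [desComp_length hm])] at h
  rw [h]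
  have : ∀ (l : List ℕ) (x : ℕ), (0 :: (l ++ [x])).getD (l.length + 1) 0 = x := by
    intro l x
    rw [List.getD_cons_succ]
    rw [List.getD_eq_getElem _ _ (by simp)]
    simp
  exact this _ _

lemma sorted_getD_lt {l : List ℕ} (hs : l.Pairwise (· < ·)) {i j : ℕ} (hij : i < j)
    (hj : j < l.length) : l.getD i 0 < l.getD j 0 := by
  rw [List.getD_eq_getElem _ _ (by omega), List.getD_eq_getElem _ _ hj]
  exact List.pairwise_iff_getElem.mp hs i j (by omega) hj hij

lemma desComp_pos {lam : List ℕ} {m : ℕ} {T : Filling} (hm : 0 < m) :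
    ∀ x ∈ desComp lam m T, 0 < x := by
  intro x hx
  obtain ⟨i, hi, rfl⟩ := List.getElem_of_mem hx
  have hlen : i < (descentList lam m T).length + 1 := by rwa [← desComp_length hm]
  have h1 := desComp_take_sum (lam := lam) (T := T) hm (t := i) (by omega)
  have h2 := desComp_take_sum (lam := lam) (T := T) hm (t := i + 1) (by omega)
  have h3 := List.sum_take_succ (desComp lam m T) i hi
  have h4 : (0 :: (descentList lam m T ++ [m])).getD i 0 <
      (0 :: (descentList lam m T ++ [m])).getD (i+1) 0 :=
    sorted_getD_lt (full_sorted lam m T hm) (by omega) (by simp; omega)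
  omega

lemma desComp_inner_eq_descent {lam : List ℕ} {m : ℕ} {T : Filling} (hm : 0 < m) {t : ℕ}
    (ht1 : 1 ≤ t) (ht2 : t ≤ (descentList lam m T).length) :
    ((desComp lam m T).take t).sum = (descentList lam m T).getD (t-1) 0 := by
  rw [desComp_take_sum hm (by omega)]
  cases t with
  | zero => omega
  | succ u =>
    rw [List.getD_cons_succ]
    rw [List.getD_eq_getElem _ _ (by simp; omega), List.getD_eq_getElem _ _ (by omega)]
    simp
    rw [List.getElem_append_left (by omega)]

lemma descent_is_partial_sum {lam : List ℕ} {m : ℕ} {T : Filling} (hm : 0 < m) {k : ℕ}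
    (hk : k ∈ descentList lam m T) :
    ∃ t, 1 ≤ t ∧ t ≤ (descentList lam m T).length ∧ ((desComp lam m T).take t).sum = k := by
  obtain ⟨i, hi, rfl⟩ := List.getElem_of_mem hk
  refine ⟨i + 1, by omega, by omega, ?_⟩
  rw [desComp_inner_eq_descent hm (by omega) (by omega)]
  simp only [Nat.add_sub_cancel]
  rw [List.getD_eq_getElem _ _ hi]

section Tableau

variable {lam : List ℕ} {m : ℕ} {T S : Filling} {mu : List ℕ}

lemma shape_mono_row (hsort : lam.Pairwise (· ≥ ·)) {i1 i2 j : ℕ}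
    (h : InShape lam i2 j) (hi : i1 ≤ i2) : InShape lam i1 j := by
  rcases eq_or_lt_of_le hi with rfl | hlt
  · exact h
  · obtain ⟨h1, h2⟩ := h
    refine ⟨by omega, ?_⟩
    have : lam.getD i1 0 ≥ lam.getD i2 0 := by
      rw [List.getD_eq_getElem _ _ (by omega), List.getD_eq_getElem _ _ h1]
      exact List.pairwise_iff_getElem.mp hsort i1 i2 (by omega) h1 hlt
    omega

lemma shape_mono_col {i j1 j2 : ℕ} (h : InShape lam i j2) (hj : j1 ≤ j2) :
    InShape lam i j1 := ⟨h.1, by have := h.2; omega⟩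

/-- NW ≤ SE in an SSYT. -/
lemma ssyt_nw (hsort : lam.Pairwise (· ≥ ·)) (hT : IsSSYT lam T) {i1 j1 i2 j2 : ℕ}
    (h2 : InShape lam i2 j2) (hi : i1 ≤ i2) (hj : j1 ≤ j2) :
    T i1 j1 ≤ T i2 j2 := by
  have hsh : InShape lam i2 j1 := shape_mono_col h2 hj
  have hrow : T i2 j1 ≤ T i2 j2 := hT.2.2.1 i2 j1 j2 hj h2
  rcases eq_or_lt_of_le hi with rfl | hlt
  · exact hrow
  · exact le_trans (le_of_lt (hT.2.2.2 i1 i2 j1 hlt hsh)) hrow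

lemma ssyt_eq_anti (hsort : lam.Pairwise (· ≥ ·)) (hT : IsSSYT lam T) {i1 j1 i2 j2 : ℕ}
    (h1 : InShape lam i1 j1) (h2 : InShape lam i2 j2)
    (heq : T i1 j1 = T i2 j2) (hj : j1 < j2) : i2 ≤ i1 := by
  by_contra h
  have : T i1 j1 < T i2 j1 := hT.2.2.2 i1 i2 j1 (by omega) (shape_mono_col h2 (by omega))
  have : T i2 j1 ≤ T i2 j2 := hT.2.2.1 i2 j1 j2 (by omega) h2
  omega

lemma ssyt_eq_col (hT : IsSSYT lam T) {i1 i2 j : ℕ}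
    (h1 : InShape lam i1 j) (h2 : InShape lam i2 j)
    (heq : T i1 j = T i2 j) : i1 = i2 := by
  rcases lt_trichotomy i1 i2 with h | h | h
  · have := hT.2.2.2 i1 i2 j h h2; omega
  · exact h
  · have := hT.2.2.2 i2 i1 j h h1; omega

/-- The tie-breaking order used by standardization. -/
def ble (T : Filling) (c d : ℕ × ℕ) : Prop :=
  T c.1 c.2 < T d.1 d.2 ∨ (T c.1 c.2 = T d.1 d.2 ∧ c.2 ≤ d.2)

lemma stdize_on {i j : ℕ} (h : InShape lam i j) :
    stdize lam T i j = ((cells lam).filter fun c => ble T c (i, j)).card := by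
  rw [stdize, if_pos h]
  congr 1
  apply Finset.filter_congr
  intro c _
  simp [ble]

lemma stdize_off {i j : ℕ} (h : ¬ InShape lam i j) : stdize lam T i j = 0 := by
  rw [stdize, if_neg h]

lemma ble_total (c d : ℕ × ℕ) : ble T c d ∨ ble T d c := by
  unfold ble; omega

lemma ble_trans {c d e : ℕ × ℕ} (h1 : ble T c d) (h2 : ble T d e) : ble T c e := by
  unfold ble at *; omega

lemma ble_antisymm (hT : IsSSYT lam T) {c d : ℕ × ℕ}
    (hc : InShape lam c.1 c.2) (hd : InShape lam d.1 d.2)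
    (h1 : ble T c d) (h2 : ble T d c) : c = d := by
  have hv : T c.1 c.2 = T d.1 d.2 := by unfold ble at *; omega
  have hcol : c.2 = d.2 := by unfold ble at *; omega
  have := ssyt_eq_col hT (hcol ▸ hc) hd (hcol ▸ hv)
  exact Prod.ext this hcol

lemma stdize_lt (hT : IsSSYT lam T) {c d : ℕ × ℕ}
    (hc : InShape lam c.1 c.2) (hd : InShape lam d.1 d.2)
    (h : ble T c d) (hne : c ≠ d) :
    stdize lam T c.1 c.2 < stdize lam T d.1 d.2 := by
  rw [stdize_on hc, stdize_on hd]
  apply Finset.card_lt_card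
  constructor
  · intro x hx
    rw [Finset.mem_filter] at *
    exact ⟨hx.1, ble_trans hx.2 h⟩
  · intro hsub
    have hdmem : d ∈ (cells lam).filter fun x => ble T x (d.1, d.2) := by
      rw [Finset.mem_filter]
      exact ⟨mem_cells.mpr hd, Or.inr ⟨rfl, le_rfl⟩⟩
    have := hsub hdmem
    rw [Finset.mem_filter] at this
    exact hne (ble_antisymm hT hd hc this.2 h).symm

lemma stdize_pos (hT : IsSSYT lam T) {c : ℕ × ℕ} (hc : InShape lam c.1 c.2) :
    1 ≤ stdize lam T c.1 c.2 := by
  rw [stdize_on hc]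
  refine Finset.card_pos.mpr ⟨c, ?_⟩
  rw [Finset.mem_filter]
  exact ⟨mem_cells.mpr hc, Or.inr ⟨rfl, le_rfl⟩⟩

lemma stdize_le (hlamsum : lam.sum = m) {c : ℕ × ℕ} (hc : InShape lam c.1 c.2) :
    stdize lam T c.1 c.2 ≤ m := by
  rw [stdize_on hc]
  calc ((cells lam).filter fun x => ble T x (c.1, c.2)).card
      ≤ (cells lam).card := Finset.card_filter_le _ _
    _ = m := by rw [card_cells, hlamsum]

lemma stdize_injOn (hT : IsSSYT lam T) {c d : ℕ × ℕ}
    (hc : InShape lam c.1 c.2) (hd : InShape lam d.1 d.2)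
    (h : stdize lam T c.1 c.2 = stdize lam T d.1 d.2) : c = d := by
  by_contra hne
  rcases ble_total (T := T) c d with hb | hb
  · have := stdize_lt hT hc hd hb hne; omega
  · have := stdize_lt hT hd hc hb (Ne.symm hne); omega

lemma stdize_image (hT : IsSSYT lam T) (hsum : lam.sum = m) :
    (cells lam).image (fun c => stdize lam T c.1 c.2) = Finset.Icc 1 m := by
  apply Finset.eq_of_subset_of_card_le
  · intro k hk
    rw [Finset.mem_image] at hk
    obtain ⟨c, hc, rfl⟩ := hk
    rw [Finset.mem_Icc]
    exact ⟨stdize_pos hT (mem_cells.mp hc), stdize_le hsum (mem_cells.mp hc)⟩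
  · have hinj : Set.InjOn (fun c : ℕ × ℕ => stdize lam T c.1 c.2) (cells lam) :=
      fun c hc d hd h => stdize_injOn hT (mem_cells.mp hc) (mem_cells.mp hd) h
    rw [Finset.card_image_of_injOn hinj, card_cells, hsum, Nat.card_Icc]
    omega

lemma stdize_isSYT (hsort : lam.Pairwise (· ≥ ·)) (hT : IsSSYT lam T)
    (hsum : lam.sum = m) : IsSYT lam m (stdize lam T) := by
  refine ⟨⟨fun i j h => stdize_off h, fun i j h => stdize_pos hT (c := (i,j)) h, ?_, ?_⟩, ?_, ?_⟩
  · intro i j1 j2 hj h2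
    rcases eq_or_lt_of_le hj with rfl | hlt
    · exact le_rfl
    · have h1 : InShape lam i j1 := shape_mono_col h2 (by omega)
      have hble : ble T (i, j1) (i, j2) := by
        have h := hT.2.2.1 i j1 j2 hj h2
        rcases lt_or_eq_of_le h with h' | h'
        · exact Or.inl h'
        · exact Or.inr ⟨h', hj⟩
      have := stdize_lt hT (c := (i,j1)) (d := (i,j2)) h1 h2 hble (by simp; omega)
      exact le_of_lt this
  · intro i1 i2 j hi h2
    have h1 : InShape lam i1 j := shape_mono_row hsort h2 (by omega)
    have hble : ble T (i1, j) (i2, j) :=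
      Or.inl (hT.2.2.2 i1 i2 j hi h2)
    exact stdize_lt hT (c := (i1,j)) (d := (i2,j)) h1 h2 hble (by simp; omega)
  · intro i j
    by_cases h : InShape lam i j
    · exact stdize_le hsum (c := (i,j)) h
    · rw [stdize_off h]; omega
  · intro k hk1 hk2
    have hmem : k ∈ (cells lam).image (fun c => stdize lam T c.1 c.2) := by
      rw [stdize_image hT hsum, Finset.mem_Icc]; exact ⟨hk1, hk2⟩
    rw [Finset.mem_image] at hmem
    obtain ⟨c, hc, hck⟩ := hmem
    refine ⟨c, ⟨mem_cells.mp hc, hck⟩, ?_⟩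
    rintro d ⟨hd1, hd2⟩
    exact stdize_injOn hT hd1 (mem_cells.mp hc) (by rw [hd2, hck])

lemma wt_entry (hwt : wt lam mu.length T = mu) {v : ℕ} (hv : v < mu.length) :
    countEq lam T (v + 1) = mu.getD v 0 := by
  conv_rhs => rw [← hwt]
  rw [wt, List.getD_eq_getElem _ _ (by simpa using hv)]
  simp

/-- The number of cells with entry ≤ v equals the v-th partial sum of the weight. -/
lemma card_le_val (hT : IsSSYT lam T) (hwt : wt lam mu.length T = mu) {v : ℕ}
    (hv : v ≤ mu.length) :
    ((cells lam).filter fun c => T c.1 c.2 ≤ v).card = (mu.take v).sum := by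
  induction v with
  | zero =>
    rw [Finset.card_eq_zero.mpr, List.take_zero, List.sum_nil]
    rw [Finset.filter_eq_empty_iff]
    intro c hc
    have := hT.2.1 c.1 c.2 (mem_cells.mp hc)
    omega
  | succ u ih =>
    have hcount := wt_entry hwt (v := u) (by omega)
    rw [countEq] at hcount
    have hdisj : Disjoint ((cells lam).filter fun c => T c.1 c.2 ≤ u)
        ((cells lam).filter fun c => T c.1 c.2 = u + 1) := by
      rw [Finset.disjoint_filter]
      intro c _ h1 h2
      omega
    have hsplit : ((cells lam).filter fun c => T c.1 c.2 ≤ u + 1) =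
        ((cells lam).filter fun c => T c.1 c.2 ≤ u) ∪
        ((cells lam).filter fun c => T c.1 c.2 = u + 1) := by
      ext c
      simp only [Finset.mem_filter, Finset.mem_union, ← and_or_left]
      exact and_congr_right fun _ => by omega
    rw [hsplit, Finset.card_union_of_disjoint hdisj, ih (by omega),
      List.sum_take_succ _ _ (by omega), hcount,
      List.getD_eq_getElem _ _ (by omega)]

/-- Each descent of the standardization is a partial sum of the weight. -/
lemma stdize_descent_partial (hsort : lam.Pairwise (· ≥ ·)) (hT : IsSSYT lam T)
    (hsum : lam.sum = m) (hwt : wt lam mu.length T = mu)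
    (hle : EntriesLE mu.length T) {k : ℕ}
    (hdes : IsDescent lam (stdize lam T) k) (hk1 : 1 ≤ k) (hk2 : k < m) :
    ∃ s, s ≤ mu.length ∧ (mu.take s).sum = k := by
  obtain ⟨i1, j1, i2, j2, hc1, hc2, he1, he2, hrow⟩ := hdes
  set c : ℕ × ℕ := (i1, j1) with hc
  set d : ℕ × ℕ := (i2, j2) with hd
  -- step 1 : T c < T d
  have hcd : c ≠ d := by
    intro h
    rw [hc, hd, Prod.mk.injEq] at h
    omega
  have hTlt : T i1 j1 < T i2 j2 := by
    rcases lt_trichotomy (T i1 j1) (T i2 j2) with h | h | h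
    · exact h
    · exfalso
      rcases lt_trichotomy j1 j2 with hj | hj | hj
      · have := ssyt_eq_anti hsort hT hc1 hc2 h hj; omega
      · have := ssyt_eq_col hT (hj ▸ hc1) hc2 (hj ▸ h); omega
      · have : ble T d c := Or.inr ⟨h.symm, show j2 ≤ j1 by omega⟩
        have := stdize_lt hT hc2 hc1 this (Ne.symm hcd)
        simp only [hc, hd] at this
        omega
    · exfalso
      have : ble T d c := Or.inl h
      have := stdize_lt hT hc2 hc1 this (Ne.symm hcd)
      simp only [hc, hd] at this
      omega
  -- step 2 : the ble-filter at c is exactly the cells with entry ≤ T c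
  have hfil : ((cells lam).filter fun x => ble T x (i1, j1)) =
      ((cells lam).filter fun x => T x.1 x.2 ≤ T i1 j1) := by
    ext x
    simp only [Finset.mem_filter, and_congr_right_iff]
    intro hx
    constructor
    · intro h
      rcases h with h | ⟨h, _⟩
      · exact le_of_lt h
      · exact le_of_eq h
    · intro h
      rcases lt_or_eq_of_le h with h' | h'
      · exact Or.inl h'
      · by_cases hcol : x.2 ≤ j1
        · exact Or.inr ⟨h', hcol⟩
        · exfalso
          have hxc : x ≠ c := by
            intro he; rw [he] at hcol; simp [hc] at hcol
          have hxd : x ≠ d := by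
            intro he
            rw [he] at h'
            simp [hd] at h'
            omega
          have l1 : stdize lam T c.1 c.2 < stdize lam T x.1 x.2 := by
            apply stdize_lt hT hc1 (mem_cells.mp hx)
            · exact Or.inr ⟨h'.symm, show j1 ≤ x.2 by omega⟩
            · exact Ne.symm hxc
          have l2 : stdize lam T x.1 x.2 < stdize lam T d.1 d.2 := by
            apply stdize_lt hT (mem_cells.mp hx) hc2
            · exact Or.inl (by rw [h']; exact hTlt)
            · exact hxd
          simp only [hc, hd] at l1 l2
          omega
  have hTc_le : T i1 j1 ≤ mu.length := hle i1 j1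
  refine ⟨T i1 j1, hTc_le, ?_⟩
  rw [← card_le_val hT hwt hTc_le, ← hfil, ← stdize_on hc1, he1]

lemma dmap_stdize (hT : IsSSYT lam T) (hwt : wt lam mu.length T = mu)
    (hle : EntriesLE mu.length T) : Dmap mu (stdize lam T) = T := by
  funext i j
  rw [Dmap]
  by_cases h : InShape lam i j
  · set v := T i j with hv
    have hv1 : 1 ≤ v := hT.2.1 i j h
    have hv2 : v ≤ mu.length := hle i j
    have hlow : (mu.take (v-1)).sum < stdize lam T i j := by
      rw [stdize_on h, ← card_le_val hT hwt (v := v-1) (by omega)]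
      apply Finset.card_lt_card
      constructor
      · intro x hx
        rw [Finset.mem_filter] at *
        refine ⟨hx.1, Or.inl ?_⟩
        show T x.1 x.2 < v
        have := hx.2
        omega
      · intro hsub
        have h1 : (i, j) ∈ (cells lam).filter fun c => ble T c (i, j) := by
          rw [Finset.mem_filter]
          exact ⟨mem_cells.mpr h, Or.inr ⟨rfl, le_rfl⟩⟩
        have h2 := hsub h1
        rw [Finset.mem_filter] at h2
        have h3 : v ≤ v - 1 := h2.2
        omega
    have hhigh : stdize lam T i j ≤ (mu.take v).sum := by
      rw [stdize_on h, ← card_le_val hT hwt hv2]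
      apply Finset.card_le_card
      intro x hx
      rw [Finset.mem_filter] at *
      refine ⟨hx.1, ?_⟩
      rcases hx.2 with h' | ⟨h', _⟩
      · exact le_of_lt h'
      · exact le_of_eq h'
    exact destValue_eq hv1 hv2 hlow hhigh
  · rw [stdize_off h, destValue_zero, hT.1 i j h]

lemma stdize_refines (hsort : lam.Pairwise (· ≥ ·)) (hT : IsSSYT lam T)
    (hsum : lam.sum = m) (hwt : wt lam mu.length T = mu) (hle : EntriesLE mu.length T)
    (hmupos : ∀ x ∈ mu, 0 < x) (hmusum : mu.sum = m) :
    Refines (desComp lam m (stdize lam T)) mu := by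
  rcases Nat.eq_zero_or_pos m with rfl | hm
  · rw [desComp, if_pos rfl]
    exact refines_of_partial_sums [] mu (by simp) hmupos (by simp [hmusum]) (by simp)
  · apply refines_of_partial_sums _ mu (desComp_pos hm) hmupos
      (by rw [desComp_sum hm, hmusum])
    intro t ht htlen
    rw [desComp_length hm] at htlen
    rw [desComp_inner_eq_descent hm (by omega) (by omega)]
    have hmem : (descentList lam m (stdize lam T)).getD (t-1) 0 ∈
        descentList lam m (stdize lam T) := by
      rw [List.getD_eq_getElem _ _ (by omega)]
      exact List.getElem_mem _
    obtain ⟨⟨hk1, hk2⟩, hdes⟩ := mem_descentList.mp hmem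
    obtain ⟨s, _, hs⟩ := stdize_descent_partial hsort hT hsum hwt hle hdes hk1 hk2
    exact ⟨s, hs⟩

noncomputable def cellOf (lam : List ℕ) (S : Filling) (k : ℕ) : ℕ × ℕ :=
  if h : ∃ c : ℕ × ℕ, InShape lam c.1 c.2 ∧ S c.1 c.2 = k then h.choose else (0, 0)

lemma cellOf_spec (hS : IsSYT lam m S) {k : ℕ} (h1 : 1 ≤ k) (h2 : k ≤ m) :
    InShape lam (cellOf lam S k).1 (cellOf lam S k).2 ∧
      S (cellOf lam S k).1 (cellOf lam S k).2 = k := by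
  obtain ⟨c, hc, hu⟩ := hS.2.2 k h1 h2
  have hex : ∃ c : ℕ × ℕ, InShape lam c.1 c.2 ∧ S c.1 c.2 = k := ⟨c, hc⟩
  rw [cellOf, dif_pos hex]
  exact hex.choose_spec

lemma cellOf_unique (hS : IsSYT lam m S) {k : ℕ} (h1 : 1 ≤ k) (h2 : k ≤ m) {c : ℕ × ℕ}
    (hc : InShape lam c.1 c.2 ∧ S c.1 c.2 = k) : c = cellOf lam S k := by
  obtain ⟨d, hd, hu⟩ := hS.2.2 k h1 h2
  rw [hu c hc, ← hu _ (cellOf_spec hS h1 h2)]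

lemma syt_inj (hS : IsSYT lam m S) {c d : ℕ × ℕ} (hc : InShape lam c.1 c.2)
    (hd : InShape lam d.1 d.2) (h : S c.1 c.2 = S d.1 d.2) : c = d := by
  have h1 : 1 ≤ S d.1 d.2 := hS.1.2.1 d.1 d.2 hd
  have h2 : S d.1 d.2 ≤ m := hS.2.1 d.1 d.2
  obtain ⟨e, he, hu⟩ := hS.2.2 (S d.1 d.2) h1 h2
  rw [hu c ⟨hc, h⟩, hu d ⟨hd, rfl⟩]

lemma step_col (hsort : lam.Pairwise (· ≥ ·)) (hS : IsSYT lam m S) {a : ℕ}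
    (ha1 : 1 ≤ a) (ha2 : a + 1 ≤ m) (hnd : ¬ IsDescent lam S a) :
    (cellOf lam S (a+1)).1 ≤ (cellOf lam S a).1 ∧
      (cellOf lam S a).2 < (cellOf lam S (a+1)).2 := by
  obtain ⟨hca, hva⟩ := cellOf_spec hS ha1 (by omega)
  obtain ⟨hcb, hvb⟩ := cellOf_spec hS (k := a+1) (by omega) ha2
  have hrow : (cellOf lam S (a+1)).1 ≤ (cellOf lam S a).1 := by
    by_contra hcon
    exact hnd ⟨(cellOf lam S a).1, (cellOf lam S a).2, (cellOf lam S (a+1)).1,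
      (cellOf lam S (a+1)).2, hca, hcb, hva, hvb, by omega⟩
  refine ⟨hrow, ?_⟩
  by_contra hcon
  have h3 := ssyt_nw (i1 := (cellOf lam S (a+1)).1) (j1 := (cellOf lam S (a+1)).2)
    hsort hS.1 hca hrow (by omega)
  rw [hva, hvb] at h3
  omega

lemma colchain (hsort : lam.Pairwise (· ≥ ·)) (hS : IsSYT lam m S) :
    ∀ n a, 1 ≤ a → a + n ≤ m → 0 < n →
    (∀ d, a ≤ d → d < a + n → ¬ IsDescent lam S d) →
    (cellOf lam S a).2 < (cellOf lam S (a + n)).2 := by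
  intro n
  induction n with
  | zero => omega
  | succ u ih =>
    intro a ha1 ha2 _ hnd
    rcases Nat.eq_zero_or_pos u with rfl | hu
    · exact (step_col hsort hS ha1 (by omega) (hnd a le_rfl (by omega))).2
    · have h1 := ih a ha1 (by omega) hu (fun d hd1 hd2 => hnd d hd1 (by omega))
      have h2 := (step_col hsort hS (a := a + u) (by omega) (by omega)
        (hnd (a+u) (by omega) (by omega))).2
      have : a + (u + 1) = (a + u) + 1 := by omega
      rw [this]
      omega

lemma no_descent_between (hS : IsSYT lam m S) (hmupos : ∀ x ∈ mu, 0 < x)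
    (hmusum : mu.sum = m) (href : Refines (desComp lam m S) mu) {a b d : ℕ}
    (hab : destValue mu a = destValue mu b)
    (h1 : a ≤ d) (h2 : d < b) (hb : b ≤ m) : ¬ IsDescent lam S d := by
  intro hdes
  have ha : a ≤ m := by omega
  have hm : 0 < m := by omega
  have hd1 : 1 ≤ d ∨ d = 0 := by omega
  rcases hd1 with hd1 | rfl
  swap
  · -- d = 0 : destValue a = destValue b impossible? a ≤ 0 so a = 0; then destValue a = 0 but b ≥ 1
    have ha0 : a = 0 := by omega
    subst ha0
    rw [destValue_zero] at hab
    obtain ⟨v, hv1, _, _, _, hv⟩ := destValue_spec hmupos (k := b) (by omega) (by omega)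
    omega
  have hdmem : d ∈ descentList lam m S := mem_descentList.mpr ⟨⟨by omega, by omega⟩, hdes⟩
  obtain ⟨t, ht1, ht2, ht3⟩ := descent_is_partial_sum hm hdmem
  obtain ⟨s, hs⟩ := partial_sums_of_refines href t
  rw [ht3] at hs
  have hslen : s < mu.length := by
    by_contra hcon
    rw [List.take_of_length_le (by omega), hmusum] at hs
    omega
  have hs1 : 1 ≤ s := by
    by_contra hcon
    have : s = 0 := by omega
    subst this
    simp at hs
    omega
  have e1 : destValue mu d = s := by
    apply destValue_eq hs1 (by omega) _ (le_of_eq hs.symm)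
    have := sum_take_strict hmupos (show s - 1 < s by omega) (by omega)
    omega
  have e2 : destValue mu (d+1) = s + 1 := by
    apply destValue_eq (by omega) (by omega) _ _
    · simp only [Nat.add_sub_cancel]
      omega
    · have := List.sum_take_succ mu s (by omega)
      have hpos : 0 < mu[s] := hmupos _ (List.getElem_mem _)
      omega
  have l1 : destValue mu a ≤ s := e1 ▸ destValue_mono mu h1
  have l2 : s + 1 ≤ destValue mu b := e2 ▸ destValue_mono mu (show d + 1 ≤ b by omega)
  omega

lemma same_block_col (hsort : lam.Pairwise (· ≥ ·)) (hS : IsSYT lam m S)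
    (hmupos : ∀ x ∈ mu, 0 < x) (hmusum : mu.sum = m)
    (href : Refines (desComp lam m S) mu) {a b : ℕ} (ha : 1 ≤ a) (hb : b ≤ m)
    (hab : a < b) (heq : destValue mu a = destValue mu b) :
    (cellOf lam S a).2 < (cellOf lam S b).2 := by
  have := colchain hsort hS (b - a) a ha (by omega) (by omega)
    (fun d hd1 hd2 => no_descent_between hS hmupos hmusum href heq hd1 (by omega) hb)
  rw [show a + (b - a) = b by omega] at this
  exact this

lemma dmap_destValue_range (hS : IsSYT lam m S) (hmupos : ∀ x ∈ mu, 0 < x)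
    (hmusum : mu.sum = m) {i j : ℕ} (h : InShape lam i j) :
    1 ≤ Dmap mu S i j ∧ Dmap mu S i j ≤ mu.length := by
  have h1 : 1 ≤ S i j := hS.1.2.1 i j h
  have h2 : S i j ≤ m := hS.2.1 i j
  obtain ⟨v, hv1, hv2, _, _, hv⟩ := destValue_spec hmupos h1 (by omega)
  rw [Dmap, hv]
  exact ⟨hv1, hv2⟩

lemma dmap_ssyt (hsort : lam.Pairwise (· ≥ ·)) (hS : IsSYT lam m S)
    (hmupos : ∀ x ∈ mu, 0 < x) (hmusum : mu.sum = m)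
    (href : Refines (desComp lam m S) mu) : IsSSYT lam (Dmap mu S) := by
  refine ⟨?_, ?_, ?_, ?_⟩
  · intro i j h
    rw [Dmap, hS.1.1 i j h, destValue_zero]
  · intro i j h
    exact (dmap_destValue_range hS hmupos hmusum h).1
  · intro i j1 j2 hj h2
    exact destValue_mono mu (hS.1.2.2.1 i j1 j2 hj h2)
  · intro i1 i2 j hi h2
    have h1 : InShape lam i1 j := shape_mono_row hsort h2 (by omega)
    have hlt : S i1 j < S i2 j := hS.1.2.2.2 i1 i2 j hi h2
    have hmono := destValue_mono mu (le_of_lt hlt)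
    rcases lt_or_eq_of_le hmono with h | h
    · exact h
    · exfalso
      have ha1 : 1 ≤ S i1 j := hS.1.2.1 i1 j h1
      have hb2 : S i2 j ≤ m := hS.2.1 i2 j
      have hcol := same_block_col hsort hS hmupos hmusum href ha1 hb2 hlt h
      have e1 : ((i1, j) : ℕ × ℕ) = cellOf lam S (S i1 j) :=
        cellOf_unique hS ha1 (by omega) ⟨h1, rfl⟩
      have e2 : ((i2, j) : ℕ × ℕ) = cellOf lam S (S i2 j) :=
        cellOf_unique hS (by omega) hb2 ⟨h2, rfl⟩
      rw [← e1, ← e2] at hcol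
      simp at hcol

lemma dmap_wt (hS : IsSYT lam m S) (hmupos : ∀ x ∈ mu, 0 < x)
    (hmusum : mu.sum = m) : wt lam mu.length (Dmap mu S) = mu := by
  apply List.ext_getElem (by simp [wt])
  intro v hv1 hv2
  have hvlen : v < mu.length := hv2
  simp only [wt, List.getElem_map, List.getElem_range, countEq]
  have hcard : ((cells lam).filter fun c => Dmap mu S c.1 c.2 = v + 1).card =
      (Finset.Ioc ((mu.take v).sum) ((mu.take (v+1)).sum)).card := by
    apply Finset.card_bij (fun c _ => S c.1 c.2)
    · intro c hc
      rw [Finset.mem_filter] at hc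
      obtain ⟨hcm, hcv⟩ := hc
      have hsh := mem_cells.mp hcm
      have h1 : 1 ≤ S c.1 c.2 := hS.1.2.1 c.1 c.2 hsh
      have h2 : S c.1 c.2 ≤ m := hS.2.1 c.1 c.2
      obtain ⟨w, hw1, hw2, hw3, hw4, hw⟩ := destValue_spec hmupos h1 (by omega)
      rw [Dmap, hw] at hcv
      subst hcv
      rw [Finset.mem_Ioc]
      constructor
      · simpa using hw3
      · exact hw4
    · intro c hc d hd h
      rw [Finset.mem_filter] at hc hd
      exact syt_inj hS (mem_cells.mp hc.1) (mem_cells.mp hd.1) h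
    · intro k hk
      rw [Finset.mem_Ioc] at hk
      have hk1 : 1 ≤ k := by
        have : (0:ℕ) ≤ (mu.take v).sum := Nat.zero_le _
        omega
      have hk2 : k ≤ m := by
        have h1 : (mu.take (v+1)).sum ≤ mu.sum := by
          conv_rhs => rw [← List.take_length (l := mu)]
          exact sum_take_mono mu (by omega)
        omega
      obtain ⟨hsh, hval⟩ := cellOf_spec hS hk1 hk2
      refine ⟨cellOf lam S k, ?_, hval⟩
      rw [Finset.mem_filter]
      refine ⟨mem_cells.mpr hsh, ?_⟩
      rw [Dmap, hval]
      exact destValue_eq (by omega) (by omega) (by simpa using hk.1) hk.2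
  rw [hcard, Nat.card_Ioc, List.sum_take_succ _ _ hvlen]
  omega

lemma stdize_dmap (hsort : lam.Pairwise (· ≥ ·)) (hS : IsSYT lam m S)
    (hmupos : ∀ x ∈ mu, 0 < x) (hmusum : mu.sum = m)
    (href : Refines (desComp lam m S) mu) : stdize lam (Dmap mu S) = S := by
  funext i j
  by_cases h : InShape lam i j
  swap
  · rw [stdize_off h, hS.1.1 i j h]
  · rw [stdize_on h]
    have hS1 : 1 ≤ S i j := hS.1.2.1 i j h
    have hSm : S i j ≤ m := hS.2.1 i j
    have hfil : ((cells lam).filter fun c => ble (Dmap mu S) c (i, j)) =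
        ((cells lam).filter fun c => S c.1 c.2 ≤ S i j) := by
      ext c
      simp only [Finset.mem_filter, and_congr_right_iff]
      intro hc
      have hsh := mem_cells.mp hc
      have hc1 : 1 ≤ S c.1 c.2 := hS.1.2.1 c.1 c.2 hsh
      have hcm : S c.1 c.2 ≤ m := hS.2.1 c.1 c.2
      constructor
      · intro hb
        rcases hb with hb | ⟨hb, hcol⟩
        · -- Dmap strictly smaller forces S smaller
          by_contra hcon
          have := destValue_mono mu (show S i j ≤ S c.1 c.2 by omega)
          have hb' : destValue mu (S c.1 c.2) < destValue mu (S i j) := hb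
          omega
        · by_cases hcc : c = (i, j)
          · rw [hcc]
          · have hne : S c.1 c.2 ≠ S i j := by
              intro hcon
              exact hcc (syt_inj hS hsh h hcon)
            by_contra hcon
            have hblock : destValue mu (S i j) = destValue mu (S c.1 c.2) := hb.symm
            have hcol2 := same_block_col hsort hS hmupos hmusum href hS1 hcm
              (by omega) hblock
            have e1 : ((i, j) : ℕ × ℕ) = cellOf lam S (S i j) :=
              cellOf_unique hS hS1 hSm ⟨h, rfl⟩
            have e2 : c = cellOf lam S (S c.1 c.2) :=
              cellOf_unique hS hc1 hcm ⟨hsh, rfl⟩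
            rw [← e1, ← e2] at hcol2
            have : (c.2 : ℕ) ≤ j := hcol
            simp at hcol2
            omega
      · intro hle
        by_cases hcc : c = (i, j)
        · subst hcc
          exact Or.inr ⟨rfl, le_rfl⟩
        · have hne : S c.1 c.2 ≠ S i j := fun hcon => hcc (syt_inj hS hsh h hcon)
          have hlt : S c.1 c.2 < S i j := by omega
          have hmono := destValue_mono mu (le_of_lt hlt)
          rcases lt_or_eq_of_le hmono with hd | hd
          · exact Or.inl hd
          · refine Or.inr ⟨hd, ?_⟩
            have hcol2 := same_block_col hsort hS hmupos hmusum href hc1 hSm hlt hd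
            have e1 : ((i, j) : ℕ × ℕ) = cellOf lam S (S i j) :=
              cellOf_unique hS hS1 hSm ⟨h, rfl⟩
            have e2 : c = cellOf lam S (S c.1 c.2) :=
              cellOf_unique hS hc1 hcm ⟨hsh, rfl⟩
            rw [← e1, ← e2] at hcol2
            simp at hcol2
            omega
    rw [hfil]
    have : ((cells lam).filter fun c => S c.1 c.2 ≤ S i j).card =
        (Finset.Icc 1 (S i j)).card := by
      apply Finset.card_bij (fun c _ => S c.1 c.2)
      · intro c hc
        rw [Finset.mem_filter] at hc
        rw [Finset.mem_Icc]
        exact ⟨hS.1.2.1 c.1 c.2 (mem_cells.mp hc.1), hc.2⟩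
      · intro c hc d hd hcd
        rw [Finset.mem_filter] at hc hd
        exact syt_inj hS (mem_cells.mp hc.1) (mem_cells.mp hd.1) hcd
      · intro k hk
        rw [Finset.mem_Icc] at hk
        obtain ⟨hsh, hval⟩ := cellOf_spec hS hk.1 (by omega)
        refine ⟨cellOf lam S k, ?_, hval⟩
        rw [Finset.mem_filter]
        exact ⟨mem_cells.mpr hsh, by rw [hval]; omega⟩
    rw [this, Nat.card_Icc]
    omega

end Tableau

lemma destValue_le (g : List ℕ) (k : ℕ) : destValue g k ≤ g.length := by
  rw [destValue]
  calc (List.filter (fun i => decide ((List.take i g).sum < k)) (List.range g.length)).length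
      ≤ (List.range g.length).length := List.length_filter_le _ _
    _ = g.length := List.length_range

/-- The Kostka number `K^lam_mu`, counting semistandard Young tableaux of shape `lam ⊢ m`
with exactly `muᵢ` entries equal to `i` (and no entries exceeding the length of `mu`),
equals the number of standard Young tableaux `T` of shape `lam` such that `mu` refines
the descent composition of `T`. -/
theorem kostka_eq_card_syt_with_refining_descomp (m : ℕ) (lam : List ℕ)
    (hlam : IsPartitionOf m lam) (mu : List ℕ) (hmu : IsCompositionOf m mu) :
    Nat.card {T : Filling // IsSSYT lam T ∧ EntriesLE mu.length T ∧
        wt lam mu.length T = mu} =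
      Nat.card {T : Filling // IsSYT lam m T ∧ Refines (desComp lam m T) mu} := by
  obtain ⟨hsort, hlampos, hsum⟩ := hlam
  obtain ⟨hmupos, hmusum⟩ := hmu
  exact Nat.card_congr
    { toFun := fun T => ⟨stdize lam T.1,
        stdize_isSYT hsort T.2.1 hsum,
        stdize_refines hsort T.2.1 hsum T.2.2.2 T.2.2.1 hmupos hmusum⟩
      invFun := fun S => ⟨Dmap mu S.1,
        dmap_ssyt hsort S.2.1 hmupos hmusum S.2.2,
        fun i j => destValue_le mu (S.1 i j),
        dmap_wt S.2.1 hmupos hmusum⟩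
      left_inv := fun T => Subtype.ext (dmap_stdize T.2.1 T.2.2.2 T.2.2.1)
      right_inv := fun S => Subtype.ext (stdize_dmap hsort S.2.1 hmupos hmusum S.2.2) }

end QC
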